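/- Let V be a real vector space, Q a symmetric bilinear form on V, and α a linear functional on V. Then the function f_α : V → ℝ, f_α(v) = α(v) + Q(v,v), is bounded from below if and only if Q is positive semidefinite (Q(v,v) ≥ 0 for all v) and sup{ α(v) : v ∈ V, Q(v,v) ≤ 1 } < ∞. -/
import Mathlib


/-- For a symmetric bilinear form `Q` and a linear functional `α` on a real
vector space `V`, the function `v ↦ α v + Q v v` is bounded from below if and only if `Q` is
positive semidefinite and `‖α‖_Q = sup { α v : Q v v ≤ 1 } < ∞`. -/
theorem quadratic_bddBelow_iff
    {V : Type*} [AddCommGroup V] [Module ℝ V]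
    (Q : V →ₗ[ℝ] V →ₗ[ℝ] ℝ) (hsymm : ∀ v w : V, Q v w = Q w v)
    (α : V →ₗ[ℝ] ℝ) :
    BddBelow (Set.range fun v : V => α v + Q v v) ↔
      (∀ v : V, 0 ≤ Q v v) ∧ BddAbove (⇑α '' {v : V | Q v v ≤ 1}) := by
  have hQs : ∀ (t : ℝ) (v : V), Q (t • v) (t • v) = t * (t * Q v v) := by
    intro t v; simp [map_smul]
  constructor
  · rintro ⟨c, hc⟩
    have hc' : ∀ v : V, c ≤ α v + Q v v := fun v => hc ⟨v, rfl⟩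
    constructor
    · intro v
      by_contra h
      push_neg at h
      set a := α v with ha
      set b := Q v v with hb
      set t := max 1 ((a + |c| + 1) / (-b)) with ht
      have ht1 : (1 : ℝ) ≤ t := le_max_left _ _
      have ht2 : (a + |c| + 1) / (-b) ≤ t := le_max_right _ _
      have hbpos : 0 < -b := by linarith
      have key := hc' (t • v)
      rw [map_smul, hQs t v, smul_eq_mul, ← ha, ← hb] at key
      have h1 : a + |c| + 1 ≤ t * (-b) := by
        rw [div_le_iff₀ hbpos] at ht2; linarith
      nlinarith [le_abs_self c, neg_abs_le c]
    · refine ⟨1 - c, ?_⟩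
      rintro x ⟨v, hv, rfl⟩
      have key := hc' (-v)
      simp only [map_neg, LinearMap.neg_apply, neg_neg] at key
      simp only [Set.mem_setOf_eq] at hv
      linarith
  · rintro ⟨hpsd, M, hM⟩
    have hM' : ∀ v : V, Q v v ≤ 1 → α v ≤ M := fun v hv => hM ⟨v, hv, rfl⟩
    have hM0 : 0 ≤ M := le_trans (by simp) (hM' 0 (by simp))
    refine ⟨-(M ^ 2 / 4), ?_⟩
    rintro x ⟨v, rfl⟩
    show -(M ^ 2 / 4) ≤ α v + Q v v
    rcases eq_or_lt_of_le (hpsd v) with h | h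
    · have hα : α v = 0 := by
        by_contra ha
        have h1 := hM' (((M + 1) / α v) • v) (by rw [hQs, ← h]; simp)
        rw [map_smul, smul_eq_mul, div_mul_cancel₀ _ ha] at h1
        linarith
      rw [hα, ← h]
      nlinarith
    · set s := Real.sqrt (Q v v) with hs
      have hspos : 0 < s := Real.sqrt_pos.mpr h
      have hs2 : s * s = Q v v := Real.mul_self_sqrt h.le
      have h1 : Q ((-s⁻¹) • v) ((-s⁻¹) • v) ≤ 1 := by
        rw [hQs, ← hs2, show (-s⁻¹) * (-s⁻¹ * (s * s)) = 1 by field_simp]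
      have h2 := hM' _ h1
      rw [map_smul, smul_eq_mul] at h2
      have h3 : -(α v) ≤ M * s := by
        have heq : -(α v) = (-s⁻¹ * α v) * s := by field_simp
        rw [heq]
        exact mul_le_mul_of_nonneg_right h2 hspos.le
      nlinarith [sq_nonneg (2 * s - M), hs2, h3]
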